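/- Let 𝔽 = {F'_α ⊂ F''_α} be a generalized flag in V (with V, V_* countable-dimensional complex vector spaces in nondegenerate pairing). The stabilizer of 𝔽 in 𝔤𝔩(V,V_*) = V ⊗ V_* equals Σ_α F''_α ⊗ (F'_α)^⊥. -/

import Mathlib

open TensorProduct

/-- The perpendicular complement of a subspace with respect to a pairing. -/
def perp {X Y : Type*} [AddCommGroup X] [Module ℂ X] [AddCommGroup Y] [Module ℂ Y]
    (B : X →ₗ[ℂ] Y →ₗ[ℂ] ℂ) (F : Submodule ℂ X) : Submodule ℂ Y where
  carrier := {y | ∀ x ∈ F, B x y = 0}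
  add_mem' := by intro a b ha hb x hx; simp [map_add, ha x hx, hb x hx]
  zero_mem' := by intro x hx; simp
  smul_mem' := by intro c a ha x hx; simp [ha x hx]

/-- `F` and `G` form an immediate predecessor-successor pair of the chain `C`. -/
def ImmPair {V : Type*} [AddCommGroup V] [Module ℂ V]
    (C : Set (Submodule ℂ V)) (F G : Submodule ℂ V) : Prop :=
  F ∈ C ∧ G ∈ C ∧ F < G ∧ ∀ H ∈ C, ¬(F < H ∧ H < G)

/-- A generalized flag in `V`: a chain of subspaces in which every member has
an immediate predecessor or an immediate successor, and every nonzero vector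
lies in `F'' \ F'` for some immediate predecessor-successor pair `F' ⊂ F''`. -/
structure GenFlag (V : Type*) [AddCommGroup V] [Module ℂ V] where
  carrier : Set (Submodule ℂ V)
  chain : IsChain (· ≤ ·) carrier
  neighbor : ∀ F ∈ carrier,
    (∃ G, ImmPair carrier G F) ∨ (∃ G, ImmPair carrier F G)
  covers : ∀ x : V, x ≠ 0 → ∃ F G, ImmPair carrier F G ∧ x ∈ G ∧ x ∉ F

/-- The action of `𝔤𝔩(V,V_*) = V ⊗ V_*` on `V`: `(v ⊗ w) · u = ⟨u, w⟩ v`. -/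
noncomputable def toEnd {V W : Type*} [AddCommGroup V] [Module ℂ V]
    [AddCommGroup W] [Module ℂ W] (B : V →ₗ[ℂ] W →ₗ[ℂ] ℂ) :
    V ⊗[ℂ] W →ₗ[ℂ] Module.End ℂ V :=
  TensorProduct.lift <| LinearMap.mk₂ ℂ (fun v w => (B.flip w).smulRight v)
    (fun v v' w => by ext u; simp)
    (fun c v w => by ext u; exact smul_comm _ _ _)
    (fun v w w' => by ext u; simp [add_smul])
    (fun c v w => by ext u; simp [smul_smul, mul_comm])

/-- The stabilizer in `𝔤𝔩(V,V_*) = V ⊗ V_*` of a family `C` of subspaces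
of `V`. -/
def glStab {V W : Type*} [AddCommGroup V] [Module ℂ V]
    [AddCommGroup W] [Module ℂ W] (B : V →ₗ[ℂ] W →ₗ[ℂ] ℂ)
    (C : Set (Submodule ℂ V)) : Submodule ℂ (V ⊗[ℂ] W) where
  carrier := {t | ∀ F ∈ C, ∀ x ∈ F, toEnd B t x ∈ F}
  add_mem' := by
    intro a b ha hb F hF x hx
    have : toEnd B (a + b) x = toEnd B a x + toEnd B b x := by simp
    rw [this]; exact F.add_mem (ha F hF x hx) (hb F hF x hx)
  zero_mem' := by intro F hF x hx; simp
  smul_mem' := by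
    intro c a ha F hF x hx
    have : toEnd B (c • a) x = c • toEnd B a x := by simp
    rw [this]; exact F.smul_mem c (ha F hF x hx)

/-- The subspace `Σ_α F''_α ⊗ (F'_α)^⊥` of `V ⊗ V_*`, the sum running over
the immediate predecessor-successor pairs of `C`. -/
noncomputable def flagSum {V W : Type*} [AddCommGroup V] [Module ℂ V]
    [AddCommGroup W] [Module ℂ W] (B : V →ₗ[ℂ] W →ₗ[ℂ] ℂ)
    (C : Set (Submodule ℂ V)) : Submodule ℂ (V ⊗[ℂ] W) :=
  ⨆ p : {q : Submodule ℂ V × Submodule ℂ V // ImmPair C q.1 q.2},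
    LinearMap.range
      (TensorProduct.map (p.1.2).subtype (perp B p.1.1).subtype)


section Aux

variable {V W : Type*} [AddCommGroup V] [Module ℂ V] [AddCommGroup W] [Module ℂ W]
variable (B : V →ₗ[ℂ] W →ₗ[ℂ] ℂ)

lemma mem_glStab {C : Set (Submodule ℂ V)} {t : V ⊗[ℂ] W} :
    t ∈ glStab B C ↔ ∀ F ∈ C, ∀ x ∈ F, toEnd B t x ∈ F := Iff.rfl

lemma mem_perp {F : Submodule ℂ V} {y : W} :
    y ∈ perp B F ↔ ∀ x ∈ F, B x y = 0 := Iff.rfl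

lemma toEnd_tmul (v : V) (w : W) (x : V) : toEnd B (v ⊗ₜ[ℂ] w) x = B x w • v := rfl

lemma toEnd_sum_apply {n : ℕ} (v : Fin n → V) (w : Fin n → W) (x : V) :
    toEnd B (∑ i, v i ⊗ₜ[ℂ] w i) x = ∑ i, B x (w i) • v i := by
  rw [map_sum]
  simp [toEnd_tmul]

lemma flagSum_le_glStab (C : Set (Submodule ℂ V)) (hC : IsChain (· ≤ ·) C) :
    flagSum B C ≤ glStab B C := by
  refine iSup_le fun p => ?_
  rintro t ⟨s, rfl⟩
  induction s using TensorProduct.induction_on with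
  | zero => simpa using (glStab B C).zero_mem
  | tmul a b =>
    obtain ⟨⟨F', F''⟩, hpair⟩ := p
    rw [mem_glStab]
    intro F hF x hx
    rw [TensorProduct.map_tmul, toEnd_tmul]
    simp only [Submodule.subtype_apply]
    rcases hC.total hpair.2.1 hF with hle | hle
    · exact F.smul_mem _ (hle a.2)
    · rcases hC.total hF hpair.1 with hle' | hle'
      · rw [b.2 x (hle' hx), zero_smul]
        exact F.zero_mem
      · rcases eq_or_lt_of_le hle' with hEq | hlt'
        · rw [b.2 x (by rw [hEq]; exact hx), zero_smul]
          exact F.zero_mem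
        · rcases eq_or_lt_of_le hle with hEq | hlt
          · exact F.smul_mem _ (by rw [hEq]; exact a.2)
          · exact absurd ⟨hlt', hlt⟩ (hpair.2.2.2 F hF)
  | add a b ha hb =>
    rw [map_add]
    exact (glStab B C).add_mem ha hb

lemma reduce : ∀ (n : ℕ) (v : Fin n → V) (w : Fin n → W),
    ∃ (m : ℕ) (v' : Fin m → V) (w' : Fin m → W),
      LinearIndependent ℂ v' ∧ (∀ i, v' i ∈ Submodule.span ℂ (Set.range v)) ∧
      ∑ i, v' i ⊗ₜ[ℂ] w' i = ∑ i, v i ⊗ₜ[ℂ] w i := by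
  intro n
  induction n with
  | zero =>
    intro v w
    exact ⟨0, v, w, linearIndependent_empty_type, fun i => i.elim0, rfl⟩
  | succ n ih =>
    intro v w
    by_cases hv : LinearIndependent ℂ v
    · exact ⟨n + 1, v, w, hv, fun i => Submodule.subset_span ⟨i, rfl⟩, rfl⟩
    obtain ⟨g, hg, i₀, hi₀⟩ := Fintype.not_linearIndependent_iff.mp hv
    set σ := Equiv.swap i₀ (Fin.last n) with hσ
    have hrel : ∑ j, g (σ j) • v (σ j) = 0 := by
      rw [Equiv.sum_comp σ (fun j => g j • v j)]; exact hg
    have hlast : σ (Fin.last n) = i₀ := Equiv.swap_apply_right _ _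
    rw [Fin.sum_univ_castSucc (fun j => g (σ j) • v (σ j)), hlast] at hrel
    have hvi₀ : v i₀ = ∑ j : Fin n, (-(g i₀)⁻¹ * g (σ j.castSucc)) • v (σ j.castSucc) := by
      have h1 : g i₀ • v i₀ = -∑ j : Fin n, g (σ j.castSucc) • v (σ j.castSucc) := by
        rw [eq_neg_iff_add_eq_zero, add_comm]; exact hrel
      have h2 : v i₀ = (g i₀)⁻¹ • (g i₀ • v i₀) := by
        rw [smul_smul, inv_mul_cancel₀ hi₀, one_smul]
      rw [h2, h1, smul_neg, Finset.smul_sum]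
      rw [← Finset.sum_neg_distrib]
      refine Finset.sum_congr rfl fun j _ => ?_
      rw [smul_smul, neg_mul, neg_smul]
    have hsum : ∑ j, v j ⊗ₜ[ℂ] w j
        = ∑ j : Fin n, v (σ j.castSucc) ⊗ₜ[ℂ]
            (w (σ j.castSucc) + (-(g i₀)⁻¹ * g (σ j.castSucc)) • w i₀) := by
      rw [← Equiv.sum_comp σ (fun j => v j ⊗ₜ[ℂ] w j),
        Fin.sum_univ_castSucc (fun j => v (σ j) ⊗ₜ[ℂ] w (σ j)), hlast]
      conv_lhs => rw [hvi₀, TensorProduct.sum_tmul]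
      rw [← Finset.sum_add_distrib]
      refine Finset.sum_congr rfl fun j _ => ?_
      rw [TensorProduct.tmul_add]
      congr 1
      rw [TensorProduct.tmul_smul, TensorProduct.smul_tmul']
    obtain ⟨m, v', w', hind, hmem, heq⟩ := ih (fun j => v (σ j.castSucc))
      (fun j => w (σ j.castSucc) + (-(g i₀)⁻¹ * g (σ j.castSucc)) • w i₀)
    refine ⟨m, v', w', hind, fun i => ?_, by rw [heq, ← hsum]⟩
    refine Submodule.span_mono ?_ (hmem i)
    rintro _ ⟨j, rfl⟩
    exact ⟨σ j.castSucc, rfl⟩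

lemma main_aux (C : Set (Submodule ℂ V)) (hchain : IsChain (· ≤ ·) C)
    (hcov : ∀ x : V, x ≠ 0 → ∃ F G, ImmPair C F G ∧ x ∈ G ∧ x ∉ F) :
    ∀ (n : ℕ) (v : Fin n → V) (w : Fin n → W), LinearIndependent ℂ v →
      (∑ i, v i ⊗ₜ[ℂ] w i) ∈ glStab B C → (∑ i, v i ⊗ₜ[ℂ] w i) ∈ flagSum B C := by
  intro n
  induction n using Nat.strong_induction_on with
  | _ n ih =>
  intro v w hv ht
  rcases Nat.eq_zero_or_pos n with rfl | hn
  · simpa using (flagSum B C).zero_mem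
  set S := Submodule.span ℂ (Set.range v) with hSdef
  haveI : FiniteDimensional ℂ S := FiniteDimensional.span_of_finite ℂ (Set.finite_range v)
  have hv0 : v ⟨0, hn⟩ ≠ 0 := hv.ne_zero _
  have hv0S : v ⟨0, hn⟩ ∈ S := Submodule.subset_span ⟨_, rfl⟩
  set P : Set ℕ := {k | ∃ u F' F'', u ∈ S ∧ u ≠ 0 ∧ ImmPair C F' F'' ∧ u ∈ F'' ∧ u ∉ F' ∧
    Module.finrank ℂ (F'' ⊓ S : Submodule ℂ V) = k} with hPdef
  have hPne : P.Nonempty := by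
    obtain ⟨F', F'', hp, hm, hnm⟩ := hcov _ hv0
    exact ⟨_, _, _, _, hv0S, hv0, hp, hm, hnm, rfl⟩
  obtain ⟨u₀, F'₀, F''₀, hu₀S, hu₀ne, hpair₀, hu₀mem, hu₀nmem, hd⟩ := Nat.sInf_mem hPne
  -- claim (a): S ⊓ F'₀ = 0
  have hstrict : Module.finrank ℂ (F'₀ ⊓ S : Submodule ℂ V)
      < Module.finrank ℂ (F''₀ ⊓ S : Submodule ℂ V) := by
    apply Submodule.finrank_lt_finrank_of_lt
    apply lt_of_le_of_ne (inf_le_inf_right _ (le_of_lt hpair₀.2.2.1))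
    intro h
    exact hu₀nmem ((Submodule.mem_inf.mp (h ▸ Submodule.mem_inf.mpr ⟨hu₀mem, hu₀S⟩)).1)
  have ha : ∀ u, u ∈ S → u ∈ F'₀ → u = 0 := by
    intro u huS huF
    by_contra hune
    obtain ⟨G', G'', hpairG, huG'', huG'⟩ := hcov u hune
    have hPG : Module.finrank ℂ (G'' ⊓ S : Submodule ℂ V) ∈ P :=
      ⟨u, G', G'', huS, hune, hpairG, huG'', huG', rfl⟩
    have hdle := Nat.sInf_le hPG
    rcases hchain.total hpairG.2.1 hpair₀.1 with hle | hle
    · have hmono : Module.finrank ℂ (G'' ⊓ S : Submodule ℂ V)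
          ≤ Module.finrank ℂ (F'₀ ⊓ S : Submodule ℂ V) :=
        Submodule.finrank_mono (inf_le_inf_right _ hle)
      omega
    · have hG'le : G' ≤ F'₀ := by
        rcases hchain.total hpairG.1 hpair₀.1 with h | h
        · exact h
        · exact absurd (h huF) huG'
      rcases eq_or_lt_of_le hle with heq | hltF
      · rw [← heq] at hPG hdle
        omega
      · rcases eq_or_lt_of_le hG'le with heq | hltG
        · exact huG' (heq ▸ huF)
        · exact hpairG.2.2.2 F'₀ hpair₀.1 ⟨hltG, hltF⟩
  -- all w i are perpendicular to F'₀
  have hw : ∀ i, w i ∈ perp B F'₀ := by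
    intro i
    rw [mem_perp]
    intro x hx
    have h1 : toEnd B (∑ i, v i ⊗ₜ[ℂ] w i) x ∈ F'₀ := ht F'₀ hpair₀.1 x hx
    have h2 : toEnd B (∑ i, v i ⊗ₜ[ℂ] w i) x ∈ S := by
      rw [toEnd_sum_apply]
      exact Submodule.sum_mem _ fun j _ =>
        Submodule.smul_mem _ _ (Submodule.subset_span ⟨j, rfl⟩)
    have h0 : ∑ j, B x (w j) • v j = 0 := by
      rw [← toEnd_sum_apply]; exact ha _ h2 h1
    exact linearIndependent_iff'.mp hv Finset.univ _ h0 i (Finset.mem_univ i)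
  -- the projection onto U = S ⊓ F''₀
  set U : Submodule ℂ V := S ⊓ F''₀ with hUdef
  obtain ⟨Z, hZ⟩ := Submodule.exists_isCompl U
  set π : V →ₗ[ℂ] V := U.subtype ∘ₗ (U.projectionOnto Z hZ) with hπdef
  have hπmem : ∀ x, π x ∈ U := fun x => (U.projectionOnto Z hZ x).2
  have hπid : ∀ x ∈ U, π x = x := by
    intro x hx
    show (U.subtype (U.projectionOnto Z hZ x) : V) = x
    rw [show x = ((⟨x, hx⟩ : U) : V) from rfl, Submodule.projectionOnto_apply_left hZ]
    rfl
  have hsplit : ∑ i, v i ⊗ₜ[ℂ] w i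
      = (∑ i, π (v i) ⊗ₜ[ℂ] w i) + ∑ i, (v i - π (v i)) ⊗ₜ[ℂ] w i := by
    rw [← Finset.sum_add_distrib]
    refine Finset.sum_congr rfl fun i _ => ?_
    rw [← TensorProduct.add_tmul, add_sub_cancel]
  have ht₁ : (∑ i, π (v i) ⊗ₜ[ℂ] w i) ∈ flagSum B C := by
    apply Submodule.mem_iSup_of_mem (⟨(F'₀, F''₀), hpair₀⟩ :
      {q : Submodule ℂ V × Submodule ℂ V // ImmPair C q.1 q.2})
    refine ⟨∑ i, (⟨π (v i), (Submodule.mem_inf.mp (hπmem (v i))).2⟩ : F''₀)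
      ⊗ₜ[ℂ] (⟨w i, hw i⟩ : perp B F'₀), ?_⟩
    rw [map_sum]
    rfl
  have ht₁' : (∑ i, π (v i) ⊗ₜ[ℂ] w i) ∈ glStab B C := flagSum_le_glStab B C hchain ht₁
  have ht₂ : (∑ i, (v i - π (v i)) ⊗ₜ[ℂ] w i) ∈ glStab B C := by
    have hsub := Submodule.sub_mem _ ht ht₁'
    rw [hsplit, add_sub_cancel_left] at hsub
    exact hsub
  -- the rank drops
  set f : S →ₗ[ℂ] V := (LinearMap.id - π) ∘ₗ S.subtype with hfdef
  have hu₀U : u₀ ∈ U := Submodule.mem_inf.mpr ⟨hu₀S, hu₀mem⟩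
  have hker : (⟨u₀, hu₀S⟩ : S) ∈ LinearMap.ker f := by
    rw [LinearMap.mem_ker, hfdef, LinearMap.comp_apply, Submodule.subtype_apply,
      LinearMap.sub_apply, LinearMap.id_apply, hπid u₀ hu₀U, sub_self]
  have hrange : ∀ i, v i - π (v i) ∈ LinearMap.range f := by
    intro i
    exact ⟨⟨v i, Submodule.subset_span ⟨i, rfl⟩⟩, rfl⟩
  have hrank : Module.finrank ℂ (LinearMap.range f) < n := by
    have h1 := LinearMap.finrank_range_add_finrank_ker f
    have h2 : Module.finrank ℂ S = n := by
      rw [hSdef, finrank_span_eq_card hv, Fintype.card_fin]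
    have h3 : 0 < Module.finrank ℂ (LinearMap.ker f) := by
      rw [Module.finrank_pos_iff]
      have hne : (⟨⟨u₀, hu₀S⟩, hker⟩ : LinearMap.ker f) ≠ 0 := by
        simp only [ne_eq, Submodule.mk_eq_zero]
        exact hu₀ne
      exact ⟨⟨_, 0, hne⟩⟩
    omega
  obtain ⟨m, v', w', hv', hv'mem, hsum⟩ := reduce n (fun i => v i - π (v i)) w
  have hspan : Submodule.span ℂ (Set.range v') ≤ LinearMap.range f := by
    rw [Submodule.span_le]
    rintro _ ⟨i, rfl⟩
    have := hv'mem i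
    refine Submodule.span_le.mpr ?_ this
    rintro _ ⟨j, rfl⟩
    exact hrange j
  have hm : m < n := by
    have h1 : Module.finrank ℂ (Submodule.span ℂ (Set.range v')) = m := by
      rw [finrank_span_eq_card hv', Fintype.card_fin]
    have h2 := Submodule.finrank_mono (R := ℂ) hspan
    omega
  have ht₂' : (∑ i, v' i ⊗ₜ[ℂ] w' i) ∈ flagSum B C := by
    apply ih m hm v' w' hv'
    rw [hsum]
    exact ht₂
  rw [hsplit]
  refine Submodule.add_mem _ ht₁ ?_
  rw [← hsum]
  exact ht₂'

end Aux

/-- for a generalized flag `𝔽 = {F'_α ⊂ F''_α}` in `V`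
(`V`, `V_*` countable-dimensional and in nondegenerate pairing), the
stabilizer of `𝔽` in `𝔤𝔩(V,V_*) = V ⊗ V_*` equals `Σ_α F''_α ⊗ (F'_α)^⊥`. -/
theorem glStab_eq_flagSum {V W : Type*} [AddCommGroup V] [Module ℂ V]
    [AddCommGroup W] [Module ℂ W]
    (hV : Module.rank ℂ V ≤ Cardinal.aleph0)
    (hW : Module.rank ℂ W ≤ Cardinal.aleph0)
    (B : V →ₗ[ℂ] W →ₗ[ℂ] ℂ)
    (hB₁ : ∀ v : V, (∀ w : W, B v w = 0) → v = 0)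
    (hB₂ : ∀ w : W, (∀ v : V, B v w = 0) → w = 0)
    (𝔽 : GenFlag V) :
    glStab B 𝔽.carrier = flagSum B 𝔽.carrier := by
  apply le_antisymm
  · intro t ht
    obtain ⟨s, rfl⟩ := TensorProduct.exists_finset t
    have hconv : ∑ p ∈ s, p.1 ⊗ₜ[ℂ] p.2
        = ∑ i : Fin s.card, ((s.equivFin.symm i : V × W).1 ⊗ₜ[ℂ] (s.equivFin.symm i : V × W).2) := by
      rw [← Finset.sum_coe_sort s (fun p => p.1 ⊗ₜ[ℂ] p.2)]
      exact (Equiv.sum_comp s.equivFin.symm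
        (fun x : s => (x : V × W).1 ⊗ₜ[ℂ] (x : V × W).2)).symm
    rw [hconv] at ht ⊢
    obtain ⟨m, v', w', hv', _, hsum⟩ := reduce s.card
      (fun i => (s.equivFin.symm i : V × W).1) (fun i => (s.equivFin.symm i : V × W).2)
    rw [← hsum] at ht ⊢
    exact main_aux B 𝔽.carrier 𝔽.chain 𝔽.covers m v' w' hv' ht
  · exact flagSum_le_glStab B 𝔽.carrier 𝔽.chain
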